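/- Let α ∈ (0, π/4), let λ ∈ ℂ with |λ| ≤ sin α, and let t ∈ [0, 1]. Then 1 + λt ≠ 0, Re((1 + λt)^{−2}) ≥ cos(2α)/4, and consequently for every n ∈ ℕ and every vector ξ = (ξ₁, …, ξ_{n+1}) ∈ ℝ^{n+1} one has Re(ξ₁²·(1 + λt)^{−2} + ξ₂² + ⋯ + ξ_{n+1}²) ≥ (cos(2α)/4)·‖ξ‖², where ‖ξ‖² = ξ₁² + ⋯ + ξ_{n+1}². -/

import Mathlib

open Real Complex Finset

private lemma key_poly_ineq (a b s : ℝ) (h1 : a^2+b^2 ≤ s^2) (h2 : s^2 ≤ 1/2) :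
    (1 - 2*s^2) * (((1+a)^2+b^2)^2) ≤ 4 * ((1+a)^2 - b^2) := by
  nlinarith [sq_nonneg (a + 1/2), sq_nonneg (b*(a+1)), sq_nonneg (a^2+b^2-1/2),
    sq_nonneg b, mul_nonneg (sq_nonneg (a+1/2)) (sq_nonneg b), sq_nonneg (a+b^2),
    sq_nonneg (a*b)]

set_option maxHeartbeats 1000000 in
theorem strong_ellipticity_symbol (α : ℝ) (hα : α ∈ Set.Ioo 0 (Real.pi / 4))
    (lam : ℂ) (hlam : ‖lam‖ ≤ Real.sin α) (t : ℝ) (ht : t ∈ Set.Icc (0 : ℝ) 1) :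
    (1 + lam * t ≠ 0) ∧
    (((1 + lam * t) ^ 2)⁻¹.re ≥ Real.cos (2 * α) / 4) ∧
    (∀ n : ℕ, ∀ ξ : Fin (n + 1) → ℝ,
      (((ξ 0 : ℂ)) ^ 2 * ((1 + lam * t) ^ 2)⁻¹
        + ∑ i ∈ Finset.univ \ {0}, ((ξ i : ℂ)) ^ 2).re
      ≥ (Real.cos (2 * α) / 4) * ∑ i, (ξ i) ^ 2) := by
  obtain ⟨hα0, hα4⟩ := hα
  obtain ⟨ht0, ht1⟩ := ht
  set s : ℝ := Real.sin α with hs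
  have hs0 : 0 ≤ s := Real.sin_nonneg_of_nonneg_of_le_pi hα0.le
    (by linarith [Real.pi_pos])
  have hs2 : s ^ 2 ≤ 1 / 2 := by
    have h1 : s ≤ Real.sin (Real.pi / 4) := by
      exact Real.sin_le_sin_of_le_of_le_pi_div_two (by linarith [Real.pi_pos])
        (by linarith [Real.pi_pos]) hα4.le
    rw [Real.sin_pi_div_four] at h1
    nlinarith [Real.sq_sqrt (by norm_num : (2:ℝ) ≥ 0)]
  set a : ℝ := (lam * t).re with ha
  set b : ℝ := (lam * t).im with hb
  have habs : a ^ 2 + b ^ 2 ≤ s ^ 2 := by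
    have h1 : ‖lam * t‖ ≤ s := by
      rw [norm_mul, Complex.norm_real, Real.norm_eq_abs, _root_.abs_of_nonneg ht0]
      have : ‖lam‖ * t ≤ s * 1 :=
        mul_le_mul hlam ht1 ht0 hs0
      linarith
    have h2 := Complex.sq_norm (lam * t)
    have h3 : ‖lam * t‖ ^ 2 ≤ s ^ 2 := by
      exact pow_le_pow_left₀ (norm_nonneg _) h1 2
    rw [h2] at h3
    simpa [Complex.normSq_apply, ← ha, ← hb, sq] using h3
  have ha2 : a ^ 2 ≤ 1 / 2 := by nlinarith
  have ha1 : -1 < a := by nlinarith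
  -- the complex number and its real/imag parts
  set z : ℂ := 1 + lam * t with hz
  have hzre : z.re = 1 + a := by simp [hz, ha]
  have hzim : z.im = b := by simp [hz, hb]
  have hzne : z ≠ 0 := by
    intro h
    rw [h] at hzre
    simp at hzre
    linarith
  have hcos : Real.cos (2 * α) = 1 - 2 * s ^ 2 := by
    rw [Real.cos_two_mul']
    have := Real.sin_sq_add_cos_sq α
    nlinarith
  -- normSq z
  have hQ : Complex.normSq z = (1 + a) ^ 2 + b ^ 2 := by
    rw [Complex.normSq_apply, hzre, hzim]; ring
  have hQpos : (0:ℝ) < (1 + a) ^ 2 + b ^ 2 := by nlinarith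
  have hre : ((z ^ 2)⁻¹).re = ((1 + a) ^ 2 - b ^ 2) / ((1 + a) ^ 2 + b ^ 2) ^ 2 := by
    rw [Complex.inv_re]
    have h1 : (z ^ 2).re = (1 + a) ^ 2 - b ^ 2 := by
      rw [sq, Complex.mul_re, hzre, hzim]; ring
    have h2 : Complex.normSq (z ^ 2) = ((1 + a) ^ 2 + b ^ 2) ^ 2 := by
      rw [map_pow, hQ]
    rw [h1, h2]
  have key : ((z ^ 2)⁻¹).re ≥ Real.cos (2 * α) / 4 := by
    rw [hre, hcos, ge_iff_le, div_le_div_iff₀ (by norm_num) (by positivity)]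
    have := key_poly_ineq a b s habs hs2
    linarith
  refine ⟨hzne, key, ?_⟩
  intro n ξ
  have hsum : ∑ i, (ξ i) ^ 2 = (ξ 0) ^ 2 + ∑ i ∈ Finset.univ \ {0}, (ξ i) ^ 2 := by
    rw [Finset.sum_eq_sum_sdiff_singleton_add (Finset.mem_univ 0) (fun i => (ξ i) ^ 2)]
    ring
  have hre2 : (((ξ 0 : ℂ)) ^ 2 * (z ^ 2)⁻¹ + ∑ i ∈ Finset.univ \ {0}, ((ξ i : ℂ)) ^ 2).re
      = (ξ 0) ^ 2 * ((z ^ 2)⁻¹).re + ∑ i ∈ Finset.univ \ {0}, (ξ i) ^ 2 := by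
    rw [Complex.add_re]
    congr 1
    · rw [show ((ξ 0 : ℂ)) ^ 2 = ((((ξ 0) ^ 2 : ℝ)) : ℂ) by push_cast; ring,
        Complex.re_ofReal_mul]
    · rw [Complex.re_sum]
      apply Finset.sum_congr rfl
      intro i _
      rw [show ((ξ i : ℂ)) ^ 2 = ((((ξ i) ^ 2 : ℝ)) : ℂ) by push_cast; ring]
      exact Complex.ofReal_re _
  rw [hre2, hsum]
  have hK : Real.cos (2 * α) / 4 ≤ 1 := by
    have := Real.cos_le_one (2 * α); linarith
  have hK0 : (ξ 0) ^ 2 * (Real.cos (2 * α) / 4) ≤ (ξ 0) ^ 2 * ((z ^ 2)⁻¹).re :=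
    mul_le_mul_of_nonneg_left key (sq_nonneg _)
  have hrest : (Real.cos (2 * α) / 4) * ∑ i ∈ Finset.univ \ {0}, (ξ i) ^ 2
      ≤ ∑ i ∈ Finset.univ \ {0}, (ξ i) ^ 2 := by
    have hnn : (0:ℝ) ≤ ∑ i ∈ Finset.univ \ {0}, (ξ i) ^ 2 :=
      Finset.sum_nonneg fun i _ => sq_nonneg _
    nlinarith
  nlinarith [hK0, hrest]
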